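/- Every 1-generic real X satisfies that the complement of X is not enumeration reducible to X. -/

import Mathlib

open Classical in
/-- The characteristic (total) function of a set of naturals, as a partial function. -/
noncomputable def chi (X : Set ℕ) : ℕ →. ℕ :=
  fun n => Part.some (if n ∈ X then 1 else 0)

/-- Partial functions computable relative to an oracle `O`. -/
inductive RecursiveIn' (O : ℕ →. ℕ) : (ℕ →. ℕ) → Prop
  | zero : RecursiveIn' O fun _ => 0
  | succ : RecursiveIn' O Nat.succ
  | left : RecursiveIn' O fun n => (Nat.unpair n).1
  | right : RecursiveIn' O fun n => (Nat.unpair n).2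
  | oracle : RecursiveIn' O O
  | pair {f g : ℕ →. ℕ} : RecursiveIn' O f → RecursiveIn' O g →
      RecursiveIn' O fun n => Nat.pair <$> f n <*> g n
  | comp {f g : ℕ →. ℕ} : RecursiveIn' O f → RecursiveIn' O g →
      RecursiveIn' O fun n => g n >>= f
  | prec {f g : ℕ →. ℕ} : RecursiveIn' O f → RecursiveIn' O g →
      RecursiveIn' O (Nat.unpaired fun a n =>
        n.rec (f a) fun y IH => do let i ← IH; g (Nat.pair a (Nat.pair y i)))
  | rfind {f : ℕ →. ℕ} : RecursiveIn' O f →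
      RecursiveIn' O fun a => Nat.rfind fun n => (fun m => m = 0) <$> f (Nat.pair a n)

/-- `X ≤_T Y` : `X` is computable with oracle `Y`. -/
def TuringLE (X Y : Set ℕ) : Prop := RecursiveIn' (chi Y) (chi X)

/-- `X` is c.e.(`Y`) : `X` is the domain of a partial function computable with oracle `Y`. -/
def CEIn (Y X : Set ℕ) : Prop := ∃ f : ℕ →. ℕ, RecursiveIn' (chi Y) f ∧ X = f.Dom

/-- `X` is relatively c.e. -/
def RelativelyCE (X : Set ℕ) : Prop := ∃ Y : Set ℕ, CEIn Y X ∧ ¬ TuringLE X Y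

/-- A computably enumerable predicate (unrelativized). -/
def CEPred {α : Type} [Primcodable α] (p : α → Prop) : Prop :=
  ∃ f : α →. Unit, Partrec f ∧ ∀ a, p a ↔ (f a).Dom

/-- `A ≤_e B` : enumeration reducibility. -/
def EnumLE (A B : Set ℕ) : Prop :=
  ∃ C : Set (ℕ × Finset ℕ), CEPred (· ∈ C) ∧
    ∀ n, n ∈ A ↔ ∃ E : Finset ℕ, ↑E ⊆ B ∧ (n, E) ∈ C

open Classical in
/-- `X ↾ k` : the binary string of the first `k` values of the characteristic function. -/
noncomputable def seg (X : Set ℕ) (k : ℕ) : List Bool :=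
  (List.range k).map fun n => decide (n ∈ X)

/-- `X` is 1-generic. -/
def OneGeneric (X : Set ℕ) : Prop :=
  ∀ S : Set (List Bool), CEPred (· ∈ S) →
    (∃ k, seg X k ∈ S) ∨ (∃ k, ∀ σ : List Bool, seg X k <+: σ → σ ∉ S)

/-- `X` is an infinite path through the tree `T`. -/
def IsPath (T : Set (List Bool)) (X : Set ℕ) : Prop := ∀ k, seg X k ∈ T

/-- `T` is a computable tree of finite binary strings. -/
def ComputableTree (T : Set (List Bool)) : Prop :=
  (∀ σ τ : List Bool, σ ∈ T → τ <+: σ → τ ∈ T) ∧ ComputablePred (· ∈ T)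


section Aux
open Encodable Primrec

private def rstep : (ℕ × List ℕ) → ℕ → (ℕ × List ℕ) := fun p m => (m + p.1 + 1, (m + p.1) :: p.2)

private lemma foldl_rstep (l : List ℕ) : ∀ n out,
    (l.foldl rstep (n, out)).2 = (Denumerable.raise' l n).reverse ++ out := by
  induction l with
  | nil => intro n out; simp [Denumerable.raise']
  | cons m l ih => intro n out; simp [Denumerable.raise', rstep, ih]

private lemma primrec_raise : Primrec (fun l : List ℕ => Denumerable.raise' l 0) := by
  have h1 : Primrec (fun l : List ℕ => (l.foldl rstep (0, ([] : List ℕ))).2.reverse) := by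
    apply Primrec.list_reverse.comp
    apply Primrec.snd.comp
    have := Primrec.list_foldl (Primrec.id (α := List ℕ)) (Primrec.const ((0 : ℕ), ([] : List ℕ)))
      (h := fun _ p => rstep p.1 p.2) ?_
    · exact this
    · show Primrec fun q : (List ℕ) × ((ℕ × List ℕ) × ℕ) =>
        ((q.2.2 + q.2.1.1 + 1, (q.2.2 + q.2.1.1) :: q.2.1.2) : ℕ × List ℕ)
      have hsum : Primrec fun q : (List ℕ) × ((ℕ × List ℕ) × ℕ) => q.2.2 + q.2.1.1 :=
        Primrec.nat_add.comp (snd.comp snd) (fst.comp (fst.comp snd))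
      exact (Primrec.succ.comp hsum).pair
        (Primrec.list_cons.comp hsum (snd.comp (fst.comp snd)))
  exact h1.of_eq fun l => by simp [foldl_rstep]

private lemma ofNat_finset_eq (m : ℕ) : Denumerable.ofNat (Finset ℕ) m =
    Finset.map (Denumerable.eqv ℕ).symm.toEmbedding
      (Denumerable.raise'Finset (Denumerable.ofNat (List ℕ) m) 0) :=
  Denumerable.ofNat_of_decode rfl

private lemma mem_raise_encode (E : Finset ℕ) (j : ℕ) :
    j ∈ Denumerable.raise' (Denumerable.ofNat (List ℕ)
      (@Encodable.encode _ Primcodable.toEncodable E)) 0 ↔ j ∈ E := by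
  have hid : ∀ i : ℕ, (Denumerable.eqv ℕ).symm.toEmbedding i = i := fun i => rfl
  conv_rhs => rw [← Denumerable.ofNat_encode E, ofNat_finset_eq]
  rw [Finset.mem_map]
  constructor
  · intro h
    exact ⟨j, Finset.mem_mk.2 (Multiset.mem_coe.2 h), hid j⟩
  · rintro ⟨i, hi, hij⟩
    rw [hid i] at hij
    subst hij
    exact Multiset.mem_coe.1 (Finset.mem_mk.1 hi)

/-- The bool-valued check used for the main c.e. set. -/
private def checkFun (σ : List Bool) (m : ℕ) : Bool :=
  σ.getD m.unpair.1 false &&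
    (Denumerable.raise' (Denumerable.ofNat (List ℕ) m.unpair.2) 0).foldl
      (fun acc j => acc && σ.getD j false) true

private lemma foldl_and {σ : List Bool} : ∀ (l : List ℕ) (b : Bool),
    (l.foldl (fun acc j => acc && σ.getD j false) b = true) ↔
      (b = true ∧ ∀ j ∈ l, σ.getD j false = true) := by
  intro l
  induction l with
  | nil => simp
  | cons a l ih =>
    intro b
    simp only [List.foldl_cons, ih, Bool.and_eq_true, List.mem_cons]
    constructor
    · rintro ⟨⟨hb, ha⟩, h⟩; exact ⟨hb, fun j hj => by rcases hj with rfl | hj; exacts [ha, h j hj]⟩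
    · rintro ⟨hb, h⟩; exact ⟨⟨hb, h a (Or.inl rfl)⟩, fun j hj => h j (Or.inr hj)⟩

private lemma primrec_checkFun : Primrec₂ checkFun := by
  have hu1 : Primrec fun p : List Bool × ℕ => p.2.unpair.1 :=
    fst.comp (Primrec.unpair.comp snd)
  have hu2 : Primrec fun p : List Bool × ℕ => p.2.unpair.2 :=
    snd.comp (Primrec.unpair.comp snd)
  have g1 : Primrec fun p : List Bool × ℕ => p.1.getD p.2.unpair.1 false :=
    (Primrec.list_getD false).comp fst hu1
  have hL : Primrec fun p : List Bool × ℕ =>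
      Denumerable.raise' (Denumerable.ofNat (List ℕ) p.2.unpair.2) 0 :=
    primrec_raise.comp ((Primrec.ofNat (List ℕ)).comp hu2)
  have hfold : Primrec fun p : List Bool × ℕ =>
      (Denumerable.raise' (Denumerable.ofNat (List ℕ) p.2.unpair.2) 0).foldl
        (fun acc j => acc && p.1.getD j false) true := by
    have := Primrec.list_foldl hL (Primrec.const true)
      (h := fun (p : List Bool × ℕ) (q : Bool × ℕ) => q.1 && p.1.getD q.2 false) ?_
    · exact this
    · show Primrec fun r : (List Bool × ℕ) × (Bool × ℕ) => r.2.1 && r.1.1.getD r.2.2 false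
      exact (Primrec.dom_bool₂ (· && ·)).comp (fst.comp snd)
        ((Primrec.list_getD false).comp (fst.comp fst) (snd.comp snd))
  exact ((Primrec.dom_bool₂ (· && ·)).comp g1 hfold).to₂

private lemma checkFun_spec (σ : List Bool) (b : ℕ × Finset ℕ) :
    checkFun σ (@Encodable.encode _ Primcodable.toEncodable b) = true ↔
      (σ.getD b.1 false = true ∧ ∀ e ∈ b.2, σ.getD e false = true) := by
  obtain ⟨n, E⟩ := b
  have henc : @Encodable.encode _ Primcodable.toEncodable ((n, E) : ℕ × Finset ℕ)
      = Nat.pair n (@Encodable.encode _ Primcodable.toEncodable E) := by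
    simp [Encodable.encode_prod_val]
  rw [checkFun, henc]
  simp only [Nat.unpair_pair, Bool.and_eq_true, foldl_and]
  constructor
  · rintro ⟨h1, _, h2⟩; exact ⟨h1, fun e he => h2 e ((mem_raise_encode E e).2 he)⟩
  · rintro ⟨h1, h2⟩; exact ⟨h1, trivial, fun j hj => h2 j ((mem_raise_encode E j).1 hj)⟩

end Aux

section MainProof
open Encodable Primrec

private lemma cepred_of_bool {α : Type} [Primcodable α] {p : α → Bool} (h : Computable p) :
    CEPred fun a => p a = true := by
  refine ⟨fun a => ((bif p a then some () else none : Option Unit) : Part Unit),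
    Computable.ofOption (Computable.cond h (Computable.const (some ())) (Computable.const none)),
    fun a => ?_⟩
  cases hp : p a <;> simp [hp, Part.ofOption]

private lemma cepred_dovetail {α β : Type} [Primcodable α] [Primcodable β] {q : β → Prop}
    {P : α → β → Prop} (hq : CEPred q) {R : α → ℕ → Bool} (hR : Primrec₂ R)
    (hPR : ∀ a (b : β), R a (encode b) = true ↔ P a b) :
    CEPred fun a => ∃ b, P a b ∧ q b := by
  obtain ⟨g, pg, hg⟩ := hq
  obtain ⟨c, hc⟩ := Nat.Partrec.Code.exists_code.1 pg
  set B : α × ℕ → Bool := fun p =>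
    (R p.1 p.2.unpair.1 &&
      decide (encode (decode (α := β) p.2.unpair.1) = p.2.unpair.1 + 1)) &&
      (Nat.Partrec.Code.evaln p.2.unpair.2 c p.2.unpair.1).isSome with hBdef
  have hu1 : Primrec fun p : α × ℕ => p.2.unpair.1 :=
    fst.comp (Primrec.unpair.comp snd)
  have hu2 : Primrec fun p : α × ℕ => p.2.unpair.2 :=
    snd.comp (Primrec.unpair.comp snd)
  have hBc : Primrec B := by
    have h1 : Primrec fun p : α × ℕ => R p.1 p.2.unpair.1 := hR.comp fst hu1
    have h2 : Primrec fun p : α × ℕ =>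
        decide (encode (decode (α := β) p.2.unpair.1) = p.2.unpair.1 + 1) :=
      (Primrec.eq.comp (Primrec.encode.comp (Primrec.decode.comp hu1)) (Primrec.succ.comp hu1)).decide
    have h3 : Primrec fun p : α × ℕ =>
        (Nat.Partrec.Code.evaln p.2.unpair.2 c p.2.unpair.1).isSome :=
      Primrec.option_isSome.comp
        (Nat.Partrec.Code.primrec_evaln.comp ((hu2.pair (Primrec.const c)).pair hu1))
    exact (Primrec.dom_bool₂ (· && ·)).comp ((Primrec.dom_bool₂ (· && ·)).comp h1 h2) h3
  refine ⟨fun a => Nat.rfindOpt (fun m => bif B (a, m) then some () else none),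
    Partrec.rfindOpt ((Primrec.cond (hBc.comp (fst.pair snd)) (Primrec.const (some ()))
      (Primrec.const none)).to_comp.to₂), fun a => ?_⟩
  rw [Nat.rfindOpt_dom]
  constructor
  · rintro ⟨b, hPab, hqb⟩
    have hgb : (g b).Dom := (hg b).1 hqb
    have hev : (Nat.Partrec.Code.eval c (encode b)).Dom := by
      rw [hc]
      simpa [Part.bind, encodek, Part.coe_some, Part.assert] using hgb
    obtain ⟨x, hx⟩ := Part.dom_iff_mem.1 hev
    obtain ⟨s, hs⟩ := Nat.Partrec.Code.evaln_complete.1 hx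
    refine ⟨Nat.pair (encode b) s, (), ?_⟩
    have : B (a, Nat.pair (encode b) s) = true := by
      simp only [hBdef, Nat.unpair_pair]
      rw [(hPR a b).2 hPab]
      simp [encodek, Option.isSome_iff_exists]
      exact ⟨x, hs⟩
    simp [this]
  · rintro ⟨m, u, hu⟩
    by_cases hBm : B (a, m) = true
    swap
    · simp [hBm] at hu
    simp only [hBdef, Bool.and_eq_true, decide_eq_true_eq] at hBm
    obtain ⟨⟨hRm, hdec⟩, hsome⟩ := hBm
    obtain ⟨b, hb⟩ : ∃ b, decode (α := β) m.unpair.1 = some b := by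
      cases hd : decode (α := β) m.unpair.1 with
      | none => rw [hd] at hdec; simp [encode_none] at hdec
      | some b => exact ⟨b, rfl⟩
    have henc : encode b = m.unpair.1 := by
      rw [hb, encode_some] at hdec; omega
    refine ⟨b, (hPR a b).1 (by rwa [henc]), (hg b).2 ?_⟩
    obtain ⟨x, hx⟩ := Option.isSome_iff_exists.1 hsome
    have hx' := Nat.Partrec.Code.evaln_sound hx
    rw [hc] at hx'
    have : (Part.bind (decode (α := β) m.unpair.1) fun a => (g a).map encode).Dom :=
      Part.dom_iff_mem.2 ⟨x, hx'⟩
    rw [hb] at this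
    simpa [Part.bind, Part.coe_some, Part.assert] using this


private lemma seg_length (X : Set ℕ) (k : ℕ) : (seg X k).length = k := by simp [seg]

private lemma seg_getElem_iff (X : Set ℕ) {i k : ℕ} (h' : i < (seg X k).length) :
    ((seg X k)[i] = true) ↔ i ∈ X := by simp [seg]

private lemma seg_getD_iff (X : Set ℕ) {i k : ℕ} (h : i < k) :
    ((seg X k).getD i false = true) ↔ i ∈ X := by
  rw [List.getD_eq_getElem _ _ (by simpa [seg_length] using h)]
  exact seg_getElem_iff X _

private lemma seg_getD_ge (X : Set ℕ) {i k : ℕ} (h : k ≤ i) :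
    (seg X k).getD i false = false :=
  List.getD_eq_default _ _ (by simpa [seg_length] using h)

private lemma seg_prefix (X : Set ℕ) {k m : ℕ} (h : k ≤ m) : seg X k <+: seg X m := by
  rw [List.prefix_iff_eq_take, seg_length]
  simp [seg, ← List.map_take, List.take_range, Nat.min_eq_left h]

private lemma seg_prefix_set (X : Set ℕ) {k n m : ℕ} (hkn : k ≤ n) (hkm : k ≤ m) :
    seg X k <+: (seg X m).set n true := by
  rw [List.prefix_iff_eq_take, seg_length]
  apply List.ext_getElem
  · simp [seg_length, Nat.min_eq_left hkm]
  · intro i h1 h2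
    have hik : i < k := by simpa [seg_length] using h1
    rw [List.getElem_take, List.getElem_set_ne (by omega)]
    simp [seg]

/-- The complement of a 1-generic real is not enumeration reducible to it. -/
theorem oneGeneric_not_enumLE (X : Set ℕ) (hX : OneGeneric X) :
    ¬ EnumLE Xᶜ X := by
  rintro ⟨C, hCce, hC⟩
  classical
  -- the main c.e. set of strings
  set P : List Bool → ℕ × Finset ℕ → Prop := fun σ b =>
    σ.getD b.1 false = true ∧ ∀ e ∈ b.2, σ.getD e false = true with hPdef
  set S : Set (List Bool) := {σ | ∃ b : ℕ × Finset ℕ, P σ b ∧ b ∈ C} with hSdef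
  have hSce : CEPred (· ∈ S) :=
    cepred_dovetail hCce primrec_checkFun (fun σ b => checkFun_spec σ b)
  rcases hX S hSce with ⟨k, hk⟩ | ⟨k, hk⟩
  · -- an initial segment is in S : contradiction
    obtain ⟨⟨n, E⟩, ⟨h1, h2⟩, hmem⟩ := hk
    have hnk : n < k := by
      by_contra hge
      rw [seg_getD_ge X (by omega)] at h1
      exact Bool.false_ne_true h1
    have hnX : n ∈ X := (seg_getD_iff X hnk).1 h1
    have hEX : ↑E ⊆ X := by
      intro e he
      have he2 := h2 e he
      have hek : e < k := by
        by_contra hge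
        rw [seg_getD_ge X (by omega)] at he2
        exact Bool.false_ne_true he2
      exact (seg_getD_iff X hek).1 he2
    exact absurd ((hC n).2 ⟨E, hEX, hmem⟩) (by simpa using hnX)
  · -- no extension of seg X k is in S : X is cofinite, contradicting genericity
    have hcof : ∀ n, k ≤ n → n ∈ X := by
      intro n hn
      by_contra hnX
      obtain ⟨E, hEX, hmem⟩ := (hC n).1 hnX
      set m := n + 1 + E.sum (fun e => e + 1) with hmdef
      have hnm : n < m := by omega
      have hem : ∀ e ∈ E, e < m := by
        intro e he
        have h1 : e + 1 ≤ ∑ x ∈ E, (x + 1) := by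
          exact Finset.single_le_sum (f := fun x => x + 1) (fun _ _ => Nat.zero_le _) he
        omega
      refine hk ((seg X m).set n true) (seg_prefix_set X hn (by omega)) ⟨(n, E), ⟨?_, ?_⟩, hmem⟩
      · rw [List.getD_eq_getElem _ _ (by simp [seg_length]; omega)]
        simp [List.getElem_set, seg_length, hnm]
      · intro e he
        rw [List.getD_eq_getElem _ _ (by simp [seg_length]; exact hem e he)]
        rcases eq_or_ne e n with rfl | hne
        · simp [List.getElem_set, seg_length, hnm]
        · rw [List.getElem_set_ne (by omega)]
          exact (seg_getElem_iff X _).2 (hEX he)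
    -- now contradict genericity with the set of strings ending in `false`
    set T : Set (List Bool) :=
      {σ | (decide (σ.reverse.head? = some false) && decide (k < σ.length)) = true} with hTdef
    have hTce : CEPred (· ∈ T) := by
      apply cepred_of_bool
      apply Primrec.to_comp
      exact (Primrec.dom_bool₂ (· && ·)).comp
        (Primrec.eq.comp (Primrec.list_head?.comp Primrec.list_reverse)
          (Primrec.const (some false))).decide
        (Primrec.nat_lt.comp (Primrec.const k) Primrec.list_length).decide
    rcases hX T hTce with ⟨m, hm⟩ | ⟨k', hk'⟩
    · have hm' : (seg X m).reverse.head? = some false ∧ k < m := by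
        have := hm
        simp only [hTdef, Set.mem_setOf_eq, Bool.and_eq_true, decide_eq_true_eq,
          seg_length] at this
        exact this
      obtain ⟨hhead, hkm⟩ := hm'
      rw [List.head?_reverse, List.getLast?_eq_getElem?, seg_length,
        List.getElem?_eq_getElem (by rw [seg_length]; omega)] at hhead
      have : ((seg X m)[m - 1]'(by rw [seg_length]; omega)) = false := by
        simpa using hhead
      have hmem : m - 1 ∈ X := hcof (m - 1) (by omega)
      rw [← seg_getElem_iff X (i := m - 1) (k := m) (by rw [seg_length]; omega)] at hmem
      rw [this] at hmem
      exact Bool.false_ne_true hmem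
    · refine hk' (seg X k' ++ List.replicate (k + 1) false) (List.prefix_append _ _) ?_
      show (decide ((seg X k' ++ List.replicate (k + 1) false).reverse.head? = some false) &&
        decide (k < (seg X k' ++ List.replicate (k + 1) false).length)) = true
      have h1 : (seg X k' ++ List.replicate (k + 1) false).reverse.head? = some false := by
        rw [List.reverse_append, List.reverse_replicate, List.replicate_succ]
        simp
      have h2 : k < (seg X k' ++ List.replicate (k + 1) false).length := by
        simp [seg_length]
        omega
      simp only [Bool.and_eq_true, decide_eq_true_eq]
      exact ⟨h1, h2⟩
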